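/- Let L be any n×n complex matrix, let γ be a rank-one projector and Γ a density matrix on ℂⁿ. Then |−tr(γLΓL* + γL*ΓL + γL*ΓL* + γLΓL) + tr(γΓL* + γLΓ)·tr(γ(L*+L)) + tr(γΓL + γL*Γ)·tr(Γ(L*+L)) − tr(Γγ)·tr(Γ(L*+L))·tr(γ(L*+L))| ≤ 28·‖L‖²·tr((I−γ)Γ). -/

import Mathlib

open Matrix ComplexOrder

/-- The operator norm of a matrix induced by the Euclidean norm on `ℂⁿ`. -/
noncomputable def euclideanOpNorm {n : ℕ} (L : Matrix (Fin n) (Fin n) ℂ) : ℝ :=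
  ‖Matrix.toEuclideanCLM (𝕜 := ℂ) L‖

namespace TraceEstimateAux

variable {N : ℕ}

/-- sesquilinear pairing -/
noncomputable def ip (x y : Fin N → ℂ) : ℂ := dotProduct (star x) y

noncomputable def ev (x : Fin N → ℂ) : EuclideanSpace ℂ (Fin N) := (WithLp.equiv 2 _).symm x

lemma ip_eq_inner (x y : Fin N → ℂ) : ip x y = (inner ℂ (ev x) (ev y) : ℂ) := by
  unfold ip ev; rw [WithLp.equiv_symm_apply, EuclideanSpace.inner_toLp_toLp, dotProduct_comm]

lemma norm_ip_le (x y : Fin N → ℂ) : ‖ip x y‖ ≤ ‖ev x‖ * ‖ev y‖ := by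
  rw [ip_eq_inner]; exact norm_inner_le_norm _ _

lemma ip_self_eq (x : Fin N → ℂ) : ip x x = ((‖ev x‖ ^ 2 : ℝ) : ℂ) := by
  rw [ip_eq_inner, inner_self_eq_norm_sq_to_K]; norm_cast

lemma dot_eq_ip (x y : Fin N → ℂ) : dotProduct (star x) y = ip x y := rfl

lemma ip_add_left (x y z : Fin N → ℂ) : ip (x + y) z = ip x z + ip y z := by
  simp [ip, add_dotProduct]

lemma ip_add_right (x y z : Fin N → ℂ) : ip x (y + z) = ip x y + ip x z := by
  simp [ip, dotProduct_add]

lemma ip_sub_left (x y z : Fin N → ℂ) : ip (x - y) z = ip x z - ip y z := by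
  unfold ip; rw [star_sub, sub_dotProduct]

lemma ip_sub_right (x y z : Fin N → ℂ) : ip x (y - z) = ip x y - ip x z := by
  unfold ip; rw [dotProduct_sub]

lemma ip_smul_left (s : ℂ) (x y : Fin N → ℂ) :
    ip (s • x) y = (starRingEnd ℂ) s * ip x y := by
  unfold ip
  rw [star_smul, smul_dotProduct, starRingEnd_apply, smul_eq_mul]

lemma ip_smul_right (s : ℂ) (x y : Fin N → ℂ) : ip x (s • y) = s * ip x y := by
  unfold ip; rw [dotProduct_smul, smul_eq_mul]

lemma ip_conj (x y : Fin N → ℂ) : (starRingEnd ℂ) (ip x y) = ip y x := by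
  simp [ip, dotProduct, map_sum, mul_comm]

lemma ip_flip (A : Matrix (Fin N) (Fin N) ℂ) (x y : Fin N → ℂ) :
    ip x (A *ᵥ y) = ip (Aᴴ *ᵥ x) y := by
  unfold ip
  rw [Matrix.dotProduct_mulVec, Matrix.star_mulVec, Matrix.conjTranspose_conjTranspose]

lemma vmv_mulVec (x y w : Fin N → ℂ) :
    Matrix.vecMulVec x y *ᵥ w = (dotProduct y w) • x := by
  ext i
  simp only [Matrix.mulVec, dotProduct, Matrix.vecMulVec_apply, Pi.smul_apply,
    smul_eq_mul, Finset.sum_mul, Finset.mul_sum]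
  exact Finset.sum_congr rfl fun j _ => by ring

lemma mul_vmv (A : Matrix (Fin N) (Fin N) ℂ) (x y : Fin N → ℂ) :
    A * Matrix.vecMulVec x y = Matrix.vecMulVec (A *ᵥ x) y := by
  ext i j
  simp only [Matrix.mul_apply, Matrix.vecMulVec_apply, Matrix.mulVec, dotProduct,
    Finset.sum_mul]
  exact Finset.sum_congr rfl fun k _ => by ring

lemma vmv_mul (A : Matrix (Fin N) (Fin N) ℂ) (x y : Fin N → ℂ) :
    Matrix.vecMulVec x y * A = Matrix.vecMulVec x (y ᵥ* A) := by
  ext i j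
  simp only [Matrix.mul_apply, Matrix.vecMulVec_apply, Matrix.vecMul, dotProduct,
    Finset.mul_sum]
  exact Finset.sum_congr rfl fun k _ => by ring

lemma vmv_mul_vmv (x y z w : Fin N → ℂ) :
    Matrix.vecMulVec x y * Matrix.vecMulVec z w
      = (dotProduct y z) • Matrix.vecMulVec x w := by
  ext i j
  simp only [Matrix.mul_apply, Matrix.vecMulVec_apply, Matrix.smul_apply, dotProduct,
    smul_eq_mul, Finset.sum_mul, Finset.mul_sum]
  exact Finset.sum_congr rfl fun k _ => by ring

lemma trace_vmv_mul (u : Fin N → ℂ) (A : Matrix (Fin N) (Fin N) ℂ) :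
    (Matrix.vecMulVec u (star u) * A).trace = ip u (A *ᵥ u) := by
  simp only [Matrix.trace, Matrix.diag, Matrix.mul_apply, Matrix.vecMulVec_apply, ip,
    dotProduct, Matrix.mulVec, Pi.star_apply, Finset.mul_sum]
  rw [Finset.sum_comm]
  exact Finset.sum_congr rfl fun i _ => Finset.sum_congr rfl fun j _ => by ring

lemma ev_mulVec (A : Matrix (Fin N) (Fin N) ℂ) (x : Fin N → ℂ) :
    ev (A *ᵥ x) = Matrix.toEuclideanCLM (𝕜 := ℂ) A (ev x) := by
  unfold ev
  rw [WithLp.equiv_symm_apply, Matrix.toEuclideanCLM_toLp]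

lemma norm_mulVec_le (A : Matrix (Fin N) (Fin N) ℂ) (x : Fin N → ℂ) :
    ‖ev (A *ᵥ x)‖ ≤ euclideanOpNorm A * ‖ev x‖ := by
  rw [ev_mulVec]
  exact (Matrix.toEuclideanCLM (𝕜 := ℂ) A).le_opNorm _

lemma eon_nonneg (A : Matrix (Fin N) (Fin N) ℂ) : 0 ≤ euclideanOpNorm A := norm_nonneg _

section L2

open scoped Matrix.Norms.L2Operator

lemma eon_eq (A : Matrix (Fin N) (Fin N) ℂ) : euclideanOpNorm A = ‖A‖ :=
  (Matrix.cstar_norm_def A).symm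

lemma eon_ct (A : Matrix (Fin N) (Fin N) ℂ) : euclideanOpNorm Aᴴ = euclideanOpNorm A := by
  rw [eon_eq, eon_eq]; exact Matrix.l2_opNorm_conjTranspose A

lemma eon_add_le (A B : Matrix (Fin N) (Fin N) ℂ) :
    euclideanOpNorm (A + B) ≤ euclideanOpNorm A + euclideanOpNorm B := by
  rw [eon_eq, eon_eq, eon_eq]; exact norm_add_le A B

end L2

lemma norm_sq_ev (x : Fin N → ℂ) : ‖ev x‖ ^ 2 = ∑ i, Complex.normSq (x i) := by
  unfold ev
  rw [EuclideanSpace.norm_eq, Real.sq_sqrt (by positivity)]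
  exact Finset.sum_congr rfl fun i _ => by
    simp [WithLp.equiv_symm_apply, Complex.sq_norm]

/-- Frobenius norm squared -/
noncomputable def froSq (A : Matrix (Fin N) (Fin N) ℂ) : ℝ := ((Aᴴ * A).trace).re

lemma froSq_eq_sum (A : Matrix (Fin N) (Fin N) ℂ) :
    froSq A = ∑ j, ∑ i, Complex.normSq (A i j) := by
  unfold froSq
  rw [Matrix.trace, Complex.re_sum]
  refine Finset.sum_congr rfl fun j _ => ?_
  rw [Matrix.diag_apply, Matrix.mul_apply, Complex.re_sum]
  refine Finset.sum_congr rfl fun i _ => ?_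
  have h : (Aᴴ) j i * A i j = ((Complex.normSq (A i j) : ℝ) : ℂ) := by
    rw [Matrix.conjTranspose_apply, Complex.normSq_eq_conj_mul_self, Complex.star_def]
  rw [h, Complex.ofReal_re]

lemma froSq_nonneg (A : Matrix (Fin N) (Fin N) ℂ) : 0 ≤ froSq A := by
  rw [froSq_eq_sum]
  exact Finset.sum_nonneg fun j _ => Finset.sum_nonneg fun i _ => Complex.normSq_nonneg _

lemma eq_zero_of_froSq_eq_zero {A : Matrix (Fin N) (Fin N) ℂ} (h : froSq A = 0) : A = 0 := by
  rw [froSq_eq_sum] at h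
  ext i j
  have h1 : ∀ j' ∈ Finset.univ, (0:ℝ) ≤ ∑ i', Complex.normSq (A i' j') :=
    fun j' _ => Finset.sum_nonneg fun i' _ => Complex.normSq_nonneg _
  have h2 := (Finset.sum_eq_zero_iff_of_nonneg h1).mp h j (Finset.mem_univ j)
  have h3 := (Finset.sum_eq_zero_iff_of_nonneg
    (fun i' _ => Complex.normSq_nonneg (A i' j))).mp h2 i (Finset.mem_univ i)
  simpa [Complex.normSq_eq_zero] using h3

lemma rows_sq_sum (A : Matrix (Fin N) (Fin N) ℂ) :
    ∑ i, ‖ev (star (A i))‖ ^ 2 = froSq A := by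
  rw [froSq_eq_sum, Finset.sum_comm]
  refine Finset.sum_congr rfl fun i _ => ?_
  rw [norm_sq_ev]
  exact Finset.sum_congr rfl fun j _ => by simp [Complex.normSq_conj]

lemma mulVec_row_ip (A : Matrix (Fin N) (Fin N) ℂ) (x : Fin N → ℂ) (i : Fin N) :
    (A *ᵥ x) i = ip (star (A i)) x := by
  simp [ip, Matrix.mulVec, dotProduct]

lemma F1 (A : Matrix (Fin N) (Fin N) ℂ) (x : Fin N → ℂ) :
    ‖ev (A *ᵥ x)‖ ^ 2 ≤ froSq A * ‖ev x‖ ^ 2 := by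
  rw [norm_sq_ev, ← rows_sq_sum, Finset.sum_mul]
  refine Finset.sum_le_sum fun i _ => ?_
  rw [mulVec_row_ip]
  calc Complex.normSq (ip (star (A i)) x) = ‖ip (star (A i)) x‖ ^ 2 := by
        rw [← Complex.sq_norm]
    _ ≤ (‖ev (star (A i))‖ * ‖ev x‖) ^ 2 := by
        have := norm_ip_le (star (A i)) x
        have h0 : (0:ℝ) ≤ ‖ip (star (A i)) x‖ := norm_nonneg _
        nlinarith
    _ = ‖ev (star (A i))‖ ^ 2 * ‖ev x‖ ^ 2 := by ring

lemma trace_sandwich (A S : Matrix (Fin N) (Fin N) ℂ) :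
    (A * S * Aᴴ).trace = ∑ i, ip (star (A i)) (S *ᵥ star (A i)) := by
  simp only [Matrix.trace, Matrix.diag, Matrix.mul_apply, Matrix.conjTranspose_apply, ip,
    dotProduct, Matrix.mulVec, Pi.star_apply, star_star, Finset.sum_mul, Finset.mul_sum]
  refine Finset.sum_congr rfl fun i _ => ?_
  rw [Finset.sum_comm]
  exact Finset.sum_congr rfl fun k _ => Finset.sum_congr rfl fun j _ => by ring

lemma F2 (A S : Matrix (Fin N) (Fin N) ℂ) :
    ‖(Aᴴ * A * S).trace‖ ≤ euclideanOpNorm S * froSq A := by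
  have hc : (Aᴴ * A * S).trace = (A * S * Aᴴ).trace := by
    rw [Matrix.trace_mul_cycle, Matrix.trace_mul_cycle S Aᴴ A]
  rw [hc, trace_sandwich]
  calc ‖∑ i, ip (star (A i)) (S *ᵥ star (A i))‖
      ≤ ∑ i, ‖ip (star (A i)) (S *ᵥ star (A i))‖ := norm_sum_le _ _
    _ ≤ ∑ i, euclideanOpNorm S * ‖ev (star (A i))‖ ^ 2 := by
        refine Finset.sum_le_sum fun i _ => ?_
        calc ‖ip (star (A i)) (S *ᵥ star (A i))‖
            ≤ ‖ev (star (A i))‖ * ‖ev (S *ᵥ star (A i))‖ := norm_ip_le _ _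
          _ ≤ ‖ev (star (A i))‖ * (euclideanOpNorm S * ‖ev (star (A i))‖) :=
              mul_le_mul_of_nonneg_left (norm_mulVec_le _ _) (norm_nonneg _)
          _ = euclideanOpNorm S * ‖ev (star (A i))‖ ^ 2 := by ring
    _ = euclideanOpNorm S * froSq A := by rw [← Finset.mul_sum, rows_sq_sum]

lemma exists_unit (γ : Matrix (Fin N) (Fin N) ℂ) (hh : γᴴ = γ) (hidem : γ * γ = γ)
    (ht : γ.trace = 1) : ∃ u, ip u u = 1 ∧ γ = Matrix.vecMulVec u (star u) := by
  have hex : ∃ i, γ i i ≠ 0 := by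
    by_contra h
    push_neg at h
    rw [Matrix.trace] at ht
    simp only [Matrix.diag, h] at ht
    simp at ht
  obtain ⟨i, hi0⟩ := hex
  set w : Fin N → ℂ := fun j => γ j i with hwdef
  have hw : γ *ᵥ w = w := by
    ext j
    have h2 : (γ * γ) j i = γ j i := by rw [hidem]
    rw [Matrix.mul_apply] at h2
    simpa [Matrix.mulVec, dotProduct, hwdef] using h2
  have hww : ip w w = γ i i := by
    have h1 : ip w w = (γᴴ * γ) i i := by
      simp [ip, dotProduct, Matrix.mul_apply, Matrix.conjTranspose_apply, hwdef]
    rw [h1, hh, hidem]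
  set r : ℝ := ‖ev w‖ with hrdef
  have hwr : γ i i = ((r ^ 2 : ℝ) : ℂ) := by rw [← hww, ip_self_eq]
  have hr0 : r ≠ 0 := by
    intro h
    rw [h] at hwr
    apply hi0
    rw [hwr]; norm_num
  have hrC : ((r : ℂ)) ≠ 0 := Complex.ofReal_ne_zero.mpr hr0
  set u : Fin N → ℂ := ((r : ℂ))⁻¹ • w with hudef
  have huu : ip u u = 1 := by
    rw [hudef, ip_smul_left, ip_smul_right, hww, hwr, map_inv₀, Complex.conj_ofReal]
    field_simp
    norm_cast
  have hγu : γ *ᵥ u = u := by rw [hudef, Matrix.mulVec_smul, hw]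
  have hvm : star u ᵥ* γ = star u := by
    have h5 : star (γᴴ *ᵥ u) = star u ᵥ* γ := by
      rw [Matrix.star_mulVec, Matrix.conjTranspose_conjTranspose]
    rw [← h5, hh, hγu]
  refine ⟨u, huu, ?_⟩
  set π := Matrix.vecMulVec u (star u) with hπ
  have hγπ : γ * π = π := by rw [hπ, mul_vmv, hγu]
  have hπγ : π * γ = π := by rw [hπ, vmv_mul, hvm]
  have hππ : π * π = π := by
    rw [hπ, vmv_mul_vmv, dot_eq_ip, huu, one_smul]
  have hπh : πᴴ = π := by
    ext j k
    simp [hπ, Matrix.conjTranspose_apply, Matrix.vecMulVec_apply, mul_comm]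
  have hπtr : π.trace = 1 := by
    have h6 : π.trace = ip u u := by
      simp [hπ, Matrix.trace, Matrix.diag, Matrix.vecMulVec_apply, ip, dotProduct,
        mul_comm]
    rw [h6, huu]
  have hP2 : (γ - π) * (γ - π) = γ - π := by
    rw [sub_mul, mul_sub, mul_sub, hidem, hγπ, hπγ, hππ]
    abel
  have hPfro : froSq (γ - π) = 0 := by
    unfold froSq
    rw [Matrix.conjTranspose_sub, hh, hπh, hP2, Matrix.trace_sub, ht, hπtr]
    norm_num
  have hP0 : γ - π = 0 := eq_zero_of_froSq_eq_zero hPfro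
  exact sub_eq_zero.mp hP0

end TraceEstimateAux

open TraceEstimateAux

set_option maxHeartbeats 1000000 in
theorem trace_estimate_general {n : ℕ} (L γ Γ : Matrix (Fin (n + 1)) (Fin (n + 1)) ℂ)
    (hγherm : γᴴ = γ) (hγidem : γ * γ = γ) (hγtr : γ.trace = 1)
    (hΓ : Γ.PosSemidef) (hΓtr : Γ.trace = 1) :
    ‖-(γ * L * Γ * Lᴴ + γ * Lᴴ * Γ * L + γ * Lᴴ * Γ * Lᴴ + γ * L * Γ * L).trace
        + (γ * Γ * Lᴴ + γ * L * Γ).trace * (γ * (Lᴴ + L)).trace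
        + (γ * Γ * L + γ * Lᴴ * Γ).trace * (Γ * (Lᴴ + L)).trace
        - (Γ * γ).trace * (Γ * (Lᴴ + L)).trace * (γ * (Lᴴ + L)).trace‖
      ≤ 28 * euclideanOpNorm L ^ 2 * ((1 - γ) * Γ).trace.re := by
  obtain ⟨u, huu, hγ⟩ := exists_unit γ hγherm hγidem hγtr
  obtain ⟨B, hB⟩ : ∃ B : Matrix (Fin (n + 1)) (Fin (n + 1)) ℂ, Γ = Bᴴ * B := by
    classical
    open scoped MatrixOrder Matrix.Norms.L2Operator in
    exact CStarAlgebra.nonneg_iff_eq_star_mul_self.mp hΓ.nonneg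
  have hΓherm : Γᴴ = Γ := hΓ.1
  set M := euclideanOpNorm L with hM_def
  set b := (Γ * (Lᴴ + L)).trace with hb_def
  set lau := Lᴴ *ᵥ u with hlau_def
  set lu := L *ᵥ u with hlu_def
  set su := (Lᴴ + L) *ᵥ u with hsu_def
  set z := Γ *ᵥ u with hz_def
  set p := ip u z with hp_def
  set a := ip u su with ha_def
  set v := z - p • u with hv_def
  set q := su - a • u with hq_def
  set D := B * (1 - γ) with hD_def
  clear_value M b lau lu su z p a v q D
  have flipΓ : ∀ x y : Fin (n + 1) → ℂ, ip (Γ *ᵥ x) y = ip x (Γ *ᵥ y) := by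
    intro x y
    rw [ip_flip Γ x y, hΓherm]
  have flipL1 : ∀ x y : Fin (n + 1) → ℂ, ip (L *ᵥ x) y = ip x (Lᴴ *ᵥ y) := by
    intro x y
    rw [ip_flip Lᴴ, Matrix.conjTranspose_conjTranspose]
  have flipLH1 : ∀ x y : Fin (n + 1) → ℂ, ip (Lᴴ *ᵥ x) y = ip x (L *ᵥ y) := by
    intro x y
    rw [ip_flip L]
  have hI : (-(γ * L * Γ * Lᴴ + γ * Lᴴ * Γ * L + γ * Lᴴ * Γ * Lᴴ + γ * L * Γ * L).trace
        + (γ * Γ * Lᴴ + γ * L * Γ).trace * (γ * (Lᴴ + L)).trace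
        + (γ * Γ * L + γ * Lᴴ * Γ).trace * b
        - (Γ * γ).trace * b * (γ * (Lᴴ + L)).trace)
      = (b - a) * (ip lu v + ip v lu) - ip q (Γ *ᵥ q) := by
    rw [hγ, Matrix.trace_mul_comm Γ (Matrix.vecMulVec u (star u))]
    simp only [hq_def, hv_def, ha_def, hp_def, hsu_def, hz_def, hlau_def, hlu_def]
    simp only [Matrix.trace_add, Matrix.mul_assoc, trace_vmv_mul]
    simp only [← Matrix.mulVec_mulVec, Matrix.add_mulVec, Matrix.mulVec_add, Matrix.mulVec_sub,
      Matrix.mulVec_smul, ip_add_left, ip_add_right, ip_sub_left, ip_sub_right, ip_smul_left,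
      ip_smul_right, map_add, map_sub, _root_.map_mul, ip_conj, flipΓ, flipL1, flipLH1]
    ring
  have hQh : (1 - γ)ᴴ = 1 - γ := by
    rw [Matrix.conjTranspose_sub, Matrix.conjTranspose_one, hγherm]
  have hQQ : (1 - γ) * (1 - γ) = 1 - γ := by
    have h0 : (1 - γ) * (1 - γ) = 1 - γ - γ + γ * γ := by noncomm_ring
    rw [h0, hγidem]; abel
  have hDD : Dᴴ * D = (1 - γ) * Γ * (1 - γ) := by
    rw [hD_def, Matrix.conjTranspose_mul, hQh, hB]
    simp only [Matrix.mul_assoc]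
  have hGdec : Γ = γ * Γ + Γ * γ - γ * Γ * γ + Dᴴ * D := by
    rw [hDD]; noncomm_ring
  have hII : b - a = (p - 1) * a + (ip su v + ip v su) + (Dᴴ * D * (Lᴴ + L)).trace := by
    rw [hb_def]
    conv_lhs => rw [hGdec]
    simp only [Matrix.add_mul, Matrix.sub_mul, Matrix.trace_add, Matrix.trace_sub]
    rw [Matrix.trace_mul_cycle Γ γ (Lᴴ + L), Matrix.trace_mul_cycle (Lᴴ + L) Γ γ]
    rw [hγ]
    simp only [hq_def, hv_def, ha_def, hp_def, hsu_def, hz_def, hlau_def, hlu_def]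
    simp only [Matrix.mul_assoc, trace_vmv_mul]
    simp only [← Matrix.mulVec_mulVec, vmv_mulVec, dot_eq_ip, Matrix.add_mulVec,
      Matrix.mulVec_add, Matrix.mulVec_sub, Matrix.mulVec_smul, ip_add_left, ip_add_right,
      ip_sub_left, ip_sub_right, ip_smul_left, ip_smul_right, map_add, map_sub, _root_.map_mul,
      ip_conj, flipΓ, flipL1, flipLH1]
    ring
  -- epsilon facts
  have htrDD : (Dᴴ * D).trace = ((1 - γ) * Γ).trace := by
    rw [hDD, Matrix.trace_mul_cycle, hQQ]
  set ε := froSq D with hε_def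
  clear_value ε
  have hεq : ε = ((Dᴴ * D).trace).re := by rw [hε_def]; rfl
  have hεtr : ((1 - γ) * Γ).trace.re = ε := by rw [hεq, htrDD]
  have hε0 : 0 ≤ ε := by rw [hε_def]; exact froSq_nonneg D
  have hεc : (Dᴴ * D).trace = 1 - p := by
    rw [htrDD, Matrix.sub_mul, Matrix.one_mul, Matrix.trace_sub, hΓtr, hγ, trace_vmv_mul,
      ← hz_def, ← hp_def]
  have hpx : p = ((‖ev (B *ᵥ u)‖ ^ 2 : ℝ) : ℂ) := by
    rw [hp_def, hz_def, hB, ← Matrix.mulVec_mulVec, ip_flip Bᴴ,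
      Matrix.conjTranspose_conjTranspose, ip_self_eq]
  have hεre : ε = 1 - ‖ev (B *ᵥ u)‖ ^ 2 := by
    rw [hεq, hεc, hpx, Complex.sub_re, Complex.one_re, Complex.ofReal_re]
  have hx2 : ‖ev (B *ᵥ u)‖ ^ 2 = 1 - ε := by linarith
  have hε1 : ε ≤ 1 := by nlinarith [sq_nonneg ‖ev (B *ᵥ u)‖]
  set sε := Real.sqrt ε with hsε_def
  clear_value sε
  have hsε0 : 0 ≤ sε := by rw [hsε_def]; exact Real.sqrt_nonneg _
  have hsε2 : sε ^ 2 = ε := by rw [hsε_def]; exact Real.sq_sqrt hε0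
  have hsε1 : sε ≤ 1 := by nlinarith
  have hu1 : ‖ev u‖ = 1 := by
    have h8 : ((‖ev u‖ ^ 2 : ℝ) : ℂ) = 1 := by rw [← ip_self_eq, huu]
    have h9 : ‖ev u‖ ^ 2 = 1 := by exact_mod_cast h8
    calc ‖ev u‖ = Real.sqrt (‖ev u‖ ^ 2) := (Real.sqrt_sq (norm_nonneg _)).symm
      _ = 1 := by rw [h9, Real.sqrt_one]
  have hM0 : 0 ≤ M := by rw [hM_def]; exact eon_nonneg L
  have hSop : euclideanOpNorm (Lᴴ + L) ≤ 2 * M := by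
    calc euclideanOpNorm (Lᴴ + L) ≤ euclideanOpNorm Lᴴ + euclideanOpNorm L := eon_add_le _ _
      _ = 2 * M := by rw [eon_ct, ← hM_def]; ring
  have hlu_n : ‖ev lu‖ ≤ M := by
    rw [hlu_def]
    calc ‖ev (L *ᵥ u)‖ ≤ euclideanOpNorm L * ‖ev u‖ := norm_mulVec_le L u
      _ = M := by rw [hu1, ← hM_def, mul_one]
  have hsu_n : ‖ev su‖ ≤ 2 * M := by
    rw [hsu_def]
    calc ‖ev ((Lᴴ + L) *ᵥ u)‖ ≤ euclideanOpNorm (Lᴴ + L) * ‖ev u‖ := norm_mulVec_le _ u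
      _ = euclideanOpNorm (Lᴴ + L) := by rw [hu1, mul_one]
      _ ≤ 2 * M := hSop
  have ha_n : ‖a‖ ≤ 2 * M := by
    rw [ha_def]
    calc ‖ip u su‖ ≤ ‖ev u‖ * ‖ev su‖ := norm_ip_le u su
      _ = ‖ev su‖ := by rw [hu1, one_mul]
      _ ≤ 2 * M := hsu_n
  -- v bound
  have hvD : v = Dᴴ *ᵥ (B *ᵥ u) := by
    have h10 : Dᴴ *ᵥ (B *ᵥ u) = (1 - γ) *ᵥ (Γ *ᵥ u) := by
      rw [hD_def, Matrix.conjTranspose_mul, hQh, hB]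
      simp only [Matrix.mulVec_mulVec]
      rw [Matrix.mul_assoc]
    rw [hv_def, h10, Matrix.sub_mulVec, Matrix.one_mulVec, hγ, vmv_mulVec, dot_eq_ip,
      ← hz_def, ← hp_def]
  have hfroDH : froSq Dᴴ = ε := by
    rw [hε_def]
    unfold froSq
    rw [Matrix.conjTranspose_conjTranspose, Matrix.trace_mul_comm]
  have hv_n : ‖ev v‖ ≤ sε := by
    have h11 := F1 Dᴴ (B *ᵥ u)
    rw [hfroDH, hx2, ← hvD] at h11
    have h12 : ‖ev v‖ ^ 2 ≤ ε := by nlinarith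
    calc ‖ev v‖ = Real.sqrt (‖ev v‖ ^ 2) := (Real.sqrt_sq (norm_nonneg _)).symm
      _ ≤ sε := by rw [hsε_def]; exact Real.sqrt_le_sqrt h12
  -- q bound
  have hqQ : q = (1 - γ) *ᵥ su := by
    rw [hq_def, Matrix.sub_mulVec, Matrix.one_mulVec, hγ, vmv_mulVec, dot_eq_ip, ← ha_def]
  have hipq : ip q (Γ *ᵥ q) = ((‖ev (D *ᵥ su)‖ ^ 2 : ℝ) : ℂ) := by
    have h12 : Γ *ᵥ q = Bᴴ *ᵥ (B *ᵥ q) := by rw [hB, Matrix.mulVec_mulVec]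
    have h13 : B *ᵥ q = D *ᵥ su := by
      rw [hqQ, Matrix.mulVec_mulVec, ← hD_def]
    rw [h12, ip_flip Bᴴ, Matrix.conjTranspose_conjTranspose, h13, ip_self_eq]
  have hDsu : ‖ev (D *ᵥ su)‖ ^ 2 ≤ ε * (2 * M) ^ 2 := by
    have h14 := F1 D su
    rw [← hε_def] at h14
    have h2M : (0:ℝ) ≤ 2 * M := by linarith
    have hsq : ‖ev su‖ ^ 2 ≤ (2 * M) ^ 2 := by nlinarith [norm_nonneg (ev su)]
    calc ‖ev (D *ᵥ su)‖ ^ 2 ≤ ε * ‖ev su‖ ^ 2 := h14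
      _ ≤ ε * (2 * M) ^ 2 := mul_le_mul_of_nonneg_left hsq hε0
  -- t bound
  have ht_n : ‖(Dᴴ * D * (Lᴴ + L)).trace‖ ≤ 2 * M * ε := by
    calc ‖(Dᴴ * D * (Lᴴ + L)).trace‖ ≤ euclideanOpNorm (Lᴴ + L) * froSq D := F2 D (Lᴴ + L)
      _ = euclideanOpNorm (Lᴴ + L) * ε := by rw [← hε_def]
      _ ≤ 2 * M * ε := mul_le_mul_of_nonneg_right hSop hε0
  have hp1 : ‖p - 1‖ = ε := by
    rw [hpx, hx2]
    have hcast : ((1 - ε : ℝ) : ℂ) - 1 = ((-ε : ℝ) : ℂ) := by push_cast; ring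
    rw [hcast, Complex.norm_real, Real.norm_eq_abs, abs_neg, abs_of_nonneg hε0]
  have hsuv : ‖ip su v‖ ≤ 2 * M * sε := by
    calc ‖ip su v‖ ≤ ‖ev su‖ * ‖ev v‖ := norm_ip_le su v
      _ ≤ 2 * M * sε := mul_le_mul hsu_n hv_n (norm_nonneg _) (by positivity)
  have hvsu : ‖ip v su‖ ≤ 2 * M * sε := by
    calc ‖ip v su‖ ≤ ‖ev v‖ * ‖ev su‖ := norm_ip_le v su
      _ ≤ sε * (2 * M) := mul_le_mul hv_n hsu_n (norm_nonneg _) hsε0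
      _ = 2 * M * sε := by ring
  have hba : ‖b - a‖ ≤ 4 * M * ε + 4 * M * sε := by
    rw [hII]
    calc ‖(p - 1) * a + (ip su v + ip v su) + (Dᴴ * D * (Lᴴ + L)).trace‖
        ≤ ‖(p - 1) * a + (ip su v + ip v su)‖ + ‖(Dᴴ * D * (Lᴴ + L)).trace‖ := norm_add_le _ _
      _ ≤ ‖(p - 1) * a‖ + ‖ip su v + ip v su‖ + ‖(Dᴴ * D * (Lᴴ + L)).trace‖ := by
          have := norm_add_le ((p - 1) * a) (ip su v + ip v su)
          linarith
      _ ≤ ‖(p - 1) * a‖ + (‖ip su v‖ + ‖ip v su‖) + ‖(Dᴴ * D * (Lᴴ + L)).trace‖ := by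
          have := norm_add_le (ip su v) (ip v su)
          linarith
      _ ≤ ε * (2 * M) + (2 * M * sε + 2 * M * sε) + 2 * M * ε := by
          have h15 : ‖(p - 1) * a‖ ≤ ε * (2 * M) := by
            rw [norm_mul, hp1]
            exact mul_le_mul_of_nonneg_left ha_n hε0
          linarith
      _ = 4 * M * ε + 4 * M * sε := by ring
  have hluv : ‖ip lu v‖ ≤ M * sε := by
    calc ‖ip lu v‖ ≤ ‖ev lu‖ * ‖ev v‖ := norm_ip_le lu v
      _ ≤ M * sε := mul_le_mul hlu_n hv_n (norm_nonneg _) hM0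
  have hvlu : ‖ip v lu‖ ≤ M * sε := by
    calc ‖ip v lu‖ ≤ ‖ev v‖ * ‖ev lu‖ := norm_ip_le v lu
      _ ≤ sε * M := mul_le_mul hv_n hlu_n (norm_nonneg _) hsε0
      _ = M * sε := by ring
  rw [hI, hεtr]
  calc ‖(b - a) * (ip lu v + ip v lu) - ip q (Γ *ᵥ q)‖
      ≤ ‖(b - a) * (ip lu v + ip v lu)‖ + ‖ip q (Γ *ᵥ q)‖ := norm_sub_le _ _
    _ = ‖b - a‖ * ‖ip lu v + ip v lu‖ + ‖ip q (Γ *ᵥ q)‖ := by rw [norm_mul]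
    _ ≤ (4 * M * ε + 4 * M * sε) * (M * sε + M * sε) + ε * (2 * M) ^ 2 := by
        have h15 : ‖ip lu v + ip v lu‖ ≤ M * sε + M * sε := by
          have := norm_add_le (ip lu v) (ip v lu)
          linarith
        have h16 : ‖ip q (Γ *ᵥ q)‖ ≤ ε * (2 * M) ^ 2 := by
          have hnn : (0:ℝ) ≤ ‖ev (D *ᵥ su)‖ ^ 2 := sq_nonneg _
          rw [hipq, Complex.norm_real, Real.norm_eq_abs, abs_of_nonneg hnn]
          exact hDsu
        have h17 : (0:ℝ) ≤ 4 * M * ε + 4 * M * sε := by positivity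
        exact add_le_add (mul_le_mul hba h15 (norm_nonneg _) h17) h16
    _ ≤ 28 * M ^ 2 * ε := by
        have k1 : (0:ℝ) ≤ M * M * ε := mul_nonneg (mul_nonneg hM0 hM0) hε0
        have k2 : (0:ℝ) ≤ M * M * ε * sε := mul_nonneg k1 hsε0
        have k3 : M * M * ε * sε ≤ M * M * ε := by nlinarith
        nlinarith
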